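/- arXiv:2010.03191 — 4 statements merged into one kernel-verified Lean document; each statement's English description precedes it below -/
import Mathlib

section
/- Let N > 0, λ > 0, P₀ ∈ (0,1]. If F(t) solves F'(t) = −(λP₀/2)·F(t) + (λP₀/2)·(N² − N(2−P₀)/P₀)·exp(−λP₀t) + N·(λ(2−P₀)/2)·exp(−λP₀t/2) with F(0) = 0, then F(t) = (N² − N(2−P₀)/P₀)·exp(−λP₀t/2)·(1 − exp(−λP₀t/2)) + N·(λ(2−P₀)t/2)·exp(−λP₀t/2). -/
open Real

theorem stmt_6 (N lam P0 : ℝ) (hN : 0 < N) (hlam : 0 < lam)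
    (hP0 : P0 ∈ Set.Ioc (0:ℝ) 1)
    (F : ℝ → ℝ)
    (hF : ∀ t : ℝ, HasDerivAt F
      (-(lam * P0 / 2) * F t
        + (lam * P0 / 2) * (N ^ 2 - N * (2 - P0) / P0) * Real.exp (-(lam * P0 * t))
        + N * (lam * (2 - P0) / 2) * Real.exp (-(lam * P0 * t) / 2)) t)
    (hF0 : F 0 = 0) :
    ∀ t : ℝ, F t =
      (N ^ 2 - N * (2 - P0) / P0) * Real.exp (-(lam * P0 * t) / 2) *
        (1 - Real.exp (-(lam * P0 * t) / 2))
      + N * (lam * (2 - P0) * t / 2) * Real.exp (-(lam * P0 * t) / 2) := by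
  set c : ℝ := lam * P0 / 2 with hc
  set A : ℝ := N ^ 2 - N * (2 - P0) / P0 with hA
  set G : ℝ → ℝ := fun t =>
      A * Real.exp (-(lam * P0 * t) / 2) * (1 - Real.exp (-(lam * P0 * t) / 2))
      + N * (lam * (2 - P0) * t / 2) * Real.exp (-(lam * P0 * t) / 2) with hG
  have hlinear : ∀ (k : ℝ) (t : ℝ), HasDerivAt (fun s : ℝ => k * s) k t := by
    intro k t
    simpa using (hasDerivAt_id t).const_mul k
  have hexp : ∀ t : ℝ, HasDerivAt (fun s : ℝ => Real.exp (-(lam * P0 * s) / 2))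
      (-c * Real.exp (-(lam * P0 * t) / 2)) t := by
    intro t
    have h1 : HasDerivAt (fun s : ℝ => -(lam * P0 * s) / 2) (-c) t := by
      have heq : (fun s : ℝ => -(lam * P0 * s) / 2) = fun s : ℝ => (-(lam * P0) / 2) * s := by
        funext s; ring
      rw [heq]
      convert hlinear (-(lam * P0) / 2) t using 1
      simp only [hc]; ring
    simpa [mul_comm] using h1.exp
  have hGd : ∀ t : ℝ, HasDerivAt G
      (-(lam * P0 / 2) * G t
        + (lam * P0 / 2) * A * Real.exp (-(lam * P0 * t))
        + N * (lam * (2 - P0) / 2) * Real.exp (-(lam * P0 * t) / 2)) t := by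
    intro t
    have h1 := (((hexp t).const_mul A).mul ((hasDerivAt_const t (1:ℝ)).sub (hexp t)))
    have hlin : HasDerivAt (fun s : ℝ => N * (lam * (2 - P0) * s / 2)) (N * (lam * (2 - P0) / 2)) t := by
      have heq : (fun s : ℝ => N * (lam * (2 - P0) * s / 2))
          = fun s : ℝ => (N * (lam * (2 - P0)) / 2) * s := by funext s; ring
      rw [heq]
      convert hlinear (N * (lam * (2 - P0)) / 2) t using 1
      ring
    have h2 := hlin.mul (hexp t)
    have := h1.add h2
    refine this.congr_deriv ?_
    have he : Real.exp (-(lam * P0 * t)) =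
        Real.exp (-(lam * P0 * t) / 2) * Real.exp (-(lam * P0 * t) / 2) := by
      rw [← Real.exp_add]; ring_nf
    simp only [hG, he, hc, Pi.sub_apply]
    ring
  have key : ∀ t : ℝ, HasDerivAt (fun s => (F s - G s) * Real.exp (c * s)) 0 t := by
    intro t
    have hd : HasDerivAt (fun s => (F s - G s))
        (-(lam * P0 / 2) * (F t - G t)) t := by
      have := (hF t).sub (hGd t)
      refine this.congr_deriv ?_
      ring
    have he : HasDerivAt (fun s : ℝ => Real.exp (c * s)) (c * Real.exp (c * t)) t := by
      have h1 : HasDerivAt (fun s : ℝ => c * s) c t := by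
        simpa using (hasDerivAt_id t).const_mul c
      simpa [mul_comm] using h1.exp
    have := hd.mul he
    refine this.congr_deriv ?_
    simp only [hc]
    ring
  have hconst : ∀ t : ℝ, (F t - G t) * Real.exp (c * t) = (F 0 - G 0) * Real.exp (c * 0) := by
    intro t
    have hdiff : Differentiable ℝ (fun s => (F s - G s) * Real.exp (c * s)) :=
      fun s => (key s).differentiableAt
    have hderiv : ∀ s, deriv (fun s => (F s - G s) * Real.exp (c * s)) s = 0 :=
      fun s => (key s).deriv
    exact is_const_of_deriv_eq_zero hdiff hderiv t 0
  intro t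
  have hG0 : G 0 = 0 := by simp [hG]
  have h := hconst t
  rw [hF0, hG0] at h
  simp only [sub_zero, zero_sub, zero_mul, sub_self] at h
  have hne : Real.exp (c * t) ≠ 0 := (Real.exp_pos _).ne'
  have : F t - G t = 0 := by
    rcases mul_eq_zero.mp h with h' | h'
    · exact h'
    · exact absurd h' hne
  have := sub_eq_zero.mp this
  rw [this]
end

section
/- Let N ≥ 1, λ > 0, P₀ ∈ (0,1]. Define Var_m(t) = ((2−P₀)N²/(NP₀ + 2(1−P₀)))·exp(−λP₀t/2) + (N²P₀(N−1)/(NP₀ + 2(1−P₀)))·exp(−(NλP₀ + λ(1−P₀))t/N) − N²·exp(−λP₀t) and Var_a(t) = N·exp(−λP₀t/2)·(1 − exp(−λP₀t/2)). Then Var_m(t) ≥ Var_a(t) for all t ≥ 0, with equality for all t when P₀ = 1. -/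
open Real

theorem stmt_11 (N lam P0 : ℝ) (hN : 1 ≤ N) (hlam : 0 < lam)
    (hP0 : P0 ∈ Set.Ioc (0:ℝ) 1)
    (Varm Vara : ℝ → ℝ)
    (hVarm : ∀ t, Varm t =
      ((2 - P0) * N ^ 2 / (N * P0 + 2 * (1 - P0))) * Real.exp (-(lam * P0 * t) / 2)
      + (N ^ 2 * P0 * (N - 1) / (N * P0 + 2 * (1 - P0))) *
          Real.exp (-((N * lam * P0 + lam * (1 - P0)) * t / N))
      - N ^ 2 * Real.exp (-(lam * P0 * t)))
    (hVara : ∀ t, Vara t = N * Real.exp (-(lam * P0 * t) / 2) *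
      (1 - Real.exp (-(lam * P0 * t) / 2))) :
    (∀ t : ℝ, 0 ≤ t → Vara t ≤ Varm t) ∧
    (P0 = 1 → ∀ t : ℝ, Varm t = Vara t) := by
  obtain ⟨hP0pos, hP0le⟩ := hP0
  have hN0 : (0:ℝ) < N := by linarith
  have hD : (0:ℝ) < N * P0 + 2 * (1 - P0) := by nlinarith
  constructor
  · intro t ht
    set x : ℝ := Real.exp (-(lam * P0 * t) / 2) with hxdef
    set E : ℝ := Real.exp (-(lam * (1 - P0) * t / N)) with hEdef
    have hx_pos : 0 < x := Real.exp_pos _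
    have hE_pos : 0 < E := Real.exp_pos _
    have hxx : Real.exp (-(lam * P0 * t)) = x ^ 2 := by
      rw [hxdef, sq, ← Real.exp_add]; ring_nf
    have hy : Real.exp (-((N * lam * P0 + lam * (1 - P0)) * t / N)) = x ^ 2 * E := by
      rw [hxdef, hEdef, sq, ← Real.exp_add, ← Real.exp_add]
      congr 1
      field_simp
      ring
    -- e^u ≥ 1 + u with u = lam*P0*t/2 : 1 ≥ x + x * (lam*P0*t/2)
    have h1 : x * (1 + lam * P0 * t / 2) ≤ 1 := by
      have := Real.add_one_le_exp (lam * P0 * t / 2)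
      have hmul := mul_le_mul_of_nonneg_left this hx_pos.le
      have hxe : x * Real.exp (lam * P0 * t / 2) = 1 := by
        rw [hxdef, ← Real.exp_add]; ring_nf; exact Real.exp_zero
      nlinarith
    -- e^{-v} ≥ 1 - v with v = lam*(1-P0)*t/N, multiplied by N:
    have h2 : N * (1 - E) ≤ lam * (1 - P0) * t := by
      have := Real.add_one_le_exp (-(lam * (1 - P0) * t / N))
      have hEge : 1 - lam * (1 - P0) * t / N ≤ E := by
        rw [hEdef]; linarith
      have := mul_le_mul_of_nonneg_left hEge hN0.le
      have hNv : N * (lam * (1 - P0) * t / N) = lam * (1 - P0) * t := by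
        field_simp
      nlinarith
    rw [hVarm t, hVara t, hxx, hy]
    rw [← sub_nonneg]
    have key : 0 ≤ (2 * N * (N - 1) * (1 - P0)) * (x * (1 - x - x * (lam * P0 * t / 2)))
        + (N * (N - 1) * P0) * (x ^ 2 * (lam * (1 - P0) * t - N * (1 - E))) := by
      have hc1 : (0:ℝ) ≤ 2 * N * (N - 1) * (1 - P0) :=
        mul_nonneg (mul_nonneg (by linarith) (by linarith)) (by linarith)
      have hc2 : (0:ℝ) ≤ N * (N - 1) * P0 :=
        mul_nonneg (mul_nonneg (by linarith) (by linarith)) (by linarith)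
      have t1 : 0 ≤ x * (1 - x - x * (lam * P0 * t / 2)) := by nlinarith
      have t2 : 0 ≤ x ^ 2 * (lam * (1 - P0) * t - N * (1 - E)) := by nlinarith [sq_nonneg x]
      positivity
    have hrw : ((2 - P0) * N ^ 2 / (N * P0 + 2 * (1 - P0))) * x
        + (N ^ 2 * P0 * (N - 1) / (N * P0 + 2 * (1 - P0))) * (x ^ 2 * E)
        - N ^ 2 * x ^ 2 - N * x * (1 - x)
        = ((2 * N * (N - 1) * (1 - P0)) * (x * (1 - x - x * (lam * P0 * t / 2)))
          + (N * (N - 1) * P0) * (x ^ 2 * (lam * (1 - P0) * t - N * (1 - E))))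
          / (N * P0 + 2 * (1 - P0)) := by
      field_simp
      ring
    rw [hrw]
    exact div_nonneg key hD.le
  · intro h1 t
    subst h1
    rw [hVarm t, hVara t]
    have hxx : Real.exp (-(lam * 1 * t)) = Real.exp (-(lam * 1 * t) / 2) ^ 2 := by
      rw [sq, ← Real.exp_add]; ring_nf
    have hy : Real.exp (-((N * lam * 1 + lam * (1 - 1)) * t / N)) = Real.exp (-(lam * 1 * t)) := by
      congr 1
      field_simp
      ring
    rw [hy, hxx]
    field_simp
    ring
end

section
/- Let N ≥ 1, λ > 0, P₀ ∈ (0,1]. Define g(t) = (2−P₀) + NP₀·exp(−λ(1−P₀)t/N)·exp(−λP₀t/2) − (NP₀ + 2(1−P₀))·exp(−λP₀t/2). Then g(0) = P₀ ≥ 0, g'(t) = λP₀·exp(−λP₀t/2)·(−1 + P₀ − NP₀/2)·(exp(−λ(1−P₀)t/N) − 1) ≥ 0 for all t ≥ 0 (assuming N ≥ 2 or NP₀/2 + 1 − P₀ ≥ 0), and hence g(t) ≥ 0 for all t ≥ 0. -/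
open Real

theorem stmt_12 (N lam P0 : ℝ) (hN : 1 ≤ N) (hlam : 0 < lam)
    (hP0 : P0 ∈ Set.Ioc (0:ℝ) 1)
    (hcond : 0 ≤ N * P0 / 2 + 1 - P0)
    (g : ℝ → ℝ)
    (hg : ∀ t, g t = (2 - P0)
      + N * P0 * Real.exp (-(lam * (1 - P0) * t) / N) * Real.exp (-(lam * P0 * t) / 2)
      - (N * P0 + 2 * (1 - P0)) * Real.exp (-(lam * P0 * t) / 2)) :
    (g 0 = P0 ∧ 0 ≤ P0) ∧
    (∀ t : ℝ, 0 ≤ t →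
      HasDerivAt g
        (lam * P0 * Real.exp (-(lam * P0 * t) / 2) * (-1 + P0 - N * P0 / 2) *
          (Real.exp (-(lam * (1 - P0) * t) / N) - 1)) t ∧
      0 ≤ lam * P0 * Real.exp (-(lam * P0 * t) / 2) * (-1 + P0 - N * P0 / 2) *
          (Real.exp (-(lam * (1 - P0) * t) / N) - 1)) ∧
    (∀ t : ℝ, 0 ≤ t → 0 ≤ g t) := by
  obtain ⟨hP0pos, hP0le⟩ := hP0
  have hN0 : (0:ℝ) < N := lt_of_lt_of_le one_pos hN
  have hgfun : g = fun t => (2 - P0)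
      + N * P0 * Real.exp (-(lam * (1 - P0)) / N * t) * Real.exp (-(lam * P0) / 2 * t)
      - (N * P0 + 2 * (1 - P0)) * Real.exp (-(lam * P0) / 2 * t) := by
    funext t
    rw [hg t]
    ring_nf
  have hderiv : ∀ t : ℝ, HasDerivAt g
      (lam * P0 * Real.exp (-(lam * P0 * t) / 2) * (-1 + P0 - N * P0 / 2) *
        (Real.exp (-(lam * (1 - P0) * t) / N) - 1)) t := by
    intro t
    rw [hgfun]
    have h1 : HasDerivAt (fun s : ℝ => Real.exp (-(lam * (1 - P0)) / N * s))
        (Real.exp (-(lam * (1 - P0)) / N * t) * (-(lam * (1 - P0)) / N)) t := by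
      exact (Real.hasDerivAt_exp _).comp t ((hasDerivAt_id t).const_mul _) |>.congr_deriv
        (by simp only [id_eq]; ring)
    have h2 : HasDerivAt (fun s : ℝ => Real.exp (-(lam * P0) / 2 * s))
        (Real.exp (-(lam * P0) / 2 * t) * (-(lam * P0) / 2)) t := by
      exact (Real.hasDerivAt_exp _).comp t ((hasDerivAt_id t).const_mul _) |>.congr_deriv
        (by simp only [id_eq]; ring)
    have h3 := ((h1.const_mul (N * P0)).mul h2).const_add (2 - P0)
    have h4 := h3.sub (h2.const_mul (N * P0 + 2 * (1 - P0)))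
    convert h4 using 1
    case e'_4 => rfl
    case e'_5 => rfl
    case e'_8 => rfl
    have e1 : -(lam * P0 * t) / 2 = -(lam * P0) / 2 * t := by ring
    have e2 : -(lam * (1 - P0) * t) / N = -(lam * (1 - P0)) / N * t := by ring
    rw [e1, e2]
    field_simp
    ring
  have hdnn : ∀ t : ℝ, 0 ≤ t →
      0 ≤ lam * P0 * Real.exp (-(lam * P0 * t) / 2) * (-1 + P0 - N * P0 / 2) *
        (Real.exp (-(lam * (1 - P0) * t) / N) - 1) := by
    intro t ht
    have hfac : Real.exp (-(lam * (1 - P0) * t) / N) - 1 ≤ 0 := by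
      have hle : -(lam * (1 - P0) * t) / N ≤ 0 := by
        apply div_nonpos_of_nonpos_of_nonneg _ hN0.le
        have : 0 ≤ lam * (1 - P0) * t :=
          mul_nonneg (mul_nonneg hlam.le (by linarith)) ht
        linarith
      have := Real.exp_le_one_iff.mpr hle
      linarith
    have hcoef : -1 + P0 - N * P0 / 2 ≤ 0 := by linarith
    have hpos : 0 ≤ lam * P0 * Real.exp (-(lam * P0 * t) / 2) := by positivity
    have : 0 ≤ (-1 + P0 - N * P0 / 2) * (Real.exp (-(lam * (1 - P0) * t) / N) - 1) := by
      nlinarith [mul_nonneg (neg_nonneg.mpr hcoef) (neg_nonneg.mpr hfac)]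
    calc (0:ℝ) ≤ lam * P0 * Real.exp (-(lam * P0 * t) / 2) *
          ((-1 + P0 - N * P0 / 2) * (Real.exp (-(lam * (1 - P0) * t) / N) - 1)) :=
        mul_nonneg hpos this
      _ = _ := by ring
  have hg0 : g 0 = P0 := by
    rw [hg 0]; simp; ring
  refine ⟨⟨hg0, hP0pos.le⟩, fun t ht => ⟨hderiv t, hdnn t ht⟩, ?_⟩
  intro t ht
  have hmono : MonotoneOn g (Set.Ici (0:ℝ)) := by
    apply monotoneOn_of_deriv_nonneg (convex_Ici 0)
    · exact fun x _ => ((hderiv x).continuousAt).continuousWithinAt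
    · intro x hx
      exact ((hderiv x).differentiableAt).differentiableWithinAt
    · intro x hx
      rw [(hderiv x).deriv]
      exact hdnn x (le_of_lt (by simpa using hx))
  have := hmono (Set.self_mem_Ici) (Set.mem_Ici.mpr ht) ht
  rw [hg0] at this
  linarith
end

section
/- Let N > 0, λ > 0, P₀ ∈ (0,1]. Define V_s(t) = N·((2−P₀)/P₀)·exp(−λP₀t/2)·(1 − exp(−λP₀t/2)) + Nλt·(1 − (2−P₀)·exp(−λP₀t/2)) and V_a(t) = N·exp(−λP₀t/2)·(1 − exp(−λP₀t/2)). Then V_s(t) ≥ V_a(t) for all t ≥ 0. -/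
open Real

theorem stmt_14 (N lam P0 : ℝ) (hN : 0 < N) (hlam : 0 < lam)
    (hP0 : P0 ∈ Set.Ioc (0:ℝ) 1)
    (Vs Va : ℝ → ℝ)
    (hVs : ∀ t, Vs t =
      N * ((2 - P0) / P0) * Real.exp (-(lam * P0 * t) / 2) *
        (1 - Real.exp (-(lam * P0 * t) / 2))
      + N * lam * t * (1 - (2 - P0) * Real.exp (-(lam * P0 * t) / 2)))
    (hVa : ∀ t, Va t = N * Real.exp (-(lam * P0 * t) / 2) *
      (1 - Real.exp (-(lam * P0 * t) / 2))) :
    ∀ t : ℝ, 0 ≤ t → Va t ≤ Vs t := by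
  obtain ⟨hP0pos, hP0le⟩ := hP0
  intro t ht
  rw [hVs t, hVa t]
  set u : ℝ := Real.exp (-(lam * P0 * t) / 2) with hu
  have hx : 0 ≤ lam * P0 * t / 2 := by positivity
  have hu0 : 0 < u := Real.exp_pos _
  have hmul : u * Real.exp (lam * P0 * t / 2) = 1 := by
    rw [hu, ← Real.exp_add]
    ring_nf
    exact Real.exp_zero
  have he1 : 1 + lam * P0 * t / 2 ≤ Real.exp (lam * P0 * t / 2) := by
    linarith [Real.add_one_le_exp (lam * P0 * t / 2)]
  have h1 : u * (1 + lam * P0 * t / 2) ≤ 1 := by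
    calc u * (1 + lam * P0 * t / 2) ≤ u * Real.exp (lam * P0 * t / 2) := by
          exact mul_le_mul_of_nonneg_left he1 hu0.le
      _ = 1 := hmul
  have h2 : 1 - lam * P0 * t / 2 ≤ u := by
    have := Real.add_one_le_exp (-(lam * P0 * t) / 2)
    linarith [this]
  have hu1 : u ≤ 1 := by
    nlinarith
  have key : 0 ≤ (1 - P0) * u * (1 - u) + (lam * P0 * t / 2) * (1 - (2 - P0) * u) := by
    nlinarith [mul_nonneg hx (sub_nonneg.mpr hu1), sq_nonneg (1 - u),
      mul_nonneg (mul_nonneg hx hx) hu0.le, mul_le_one₀ hP0le hu0.le hu1,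
      mul_nonneg (sub_nonneg.mpr hP0le) (mul_nonneg hu0.le (sub_nonneg.mpr hu1)),
      mul_le_mul_of_nonneg_left h1 (mul_nonneg hx (sub_nonneg.mpr hP0le))]
  have hdiff : N * ((2 - P0) / P0) * u * (1 - u)
      + N * lam * t * (1 - (2 - P0) * u) - N * u * (1 - u)
      = (2 * N / P0) * ((1 - P0) * u * (1 - u) + (lam * P0 * t / 2) * (1 - (2 - P0) * u)) := by
    field_simp
    ring
  nlinarith [mul_nonneg (by positivity : (0:ℝ) ≤ 2 * N / P0) key]
end
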